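/- arXiv:2305.06479 — 3 statements merged into one kernel-verified Lean document; each statement's English description precedes it below -/
import Mathlib

section
/- Let A be the n-by-n reciprocal matrix of block form [[B, J],[J, J]], n >= 4, where B is the 3-by-3 reciprocal matrix with above-diagonal entries a_{12}, a_{13}, a_{23} and a_{13} >= 1. Let q = a_{13} - a_{23} a_{12}. If a_{12} >= 1, a_{23} >= 1, and q <= 0, then the Perron eigenvector of A is efficient for A. -/
lemma sum_split {n : ℕ} (hn : 4 ≤ n) (f : Fin n → ℝ) :
    ∑ j, f j = f ⟨0, Nat.lt_of_lt_of_le (by norm_num) hn⟩ + f ⟨1, Nat.lt_of_lt_of_le (by norm_num) hn⟩ + f ⟨2, Nat.lt_of_lt_of_le (by norm_num) hn⟩ +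
      ∑ j ∈ Finset.univ.filter (fun j : Fin n => 3 ≤ j.val), f j := by
  classical
  have h1 : (Finset.univ.filter (fun j : Fin n => ¬ 3 ≤ j.val)) =
      {⟨0, Nat.lt_of_lt_of_le (by norm_num) hn⟩, ⟨1, Nat.lt_of_lt_of_le (by norm_num) hn⟩, ⟨2, Nat.lt_of_lt_of_le (by norm_num) hn⟩} := by
    ext j
    simp [Fin.ext_iff]
    omega
  have h2 := Finset.sum_filter_add_sum_filter_not Finset.univ (fun j : Fin n => ¬ 3 ≤ j.val) f
  rw [h1] at h2
  simp only [not_not] at h2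
  rw [← h2]
  rw [Finset.sum_insert (by simp [Fin.ext_iff]), Finset.sum_insert (by simp [Fin.ext_iff]),
    Finset.sum_singleton]
  ring

lemma aux_le {m a b : ℝ} (hm : 0 < m) (h : 0 ≤ m * (a - b)) : b ≤ a := by nlinarith

/-- A positive reciprocal (pairwise comparison) matrix. -/
def Reciprocal {n : ℕ} (A : Matrix (Fin n) (Fin n) ℝ) : Prop :=
  (∀ i j, 0 < A i j) ∧ ∀ i j, A j i = (A i j)⁻¹

/-- A positive vector `w` is efficient for `A` (Pareto optimality). -/
def Efficient {n : ℕ} (A : Matrix (Fin n) (Fin n) ℝ) (w : Fin n → ℝ) : Prop :=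
  (∀ i, 0 < w i) ∧ ∀ v : Fin n → ℝ, (∀ i, 0 < v i) →
    (∀ i j, |A i j - v i / v j| ≤ |A i j - w i / w j|) →
    ∀ i j, v i / v j = w i / w j

/-- Sufficient condition (case 1) for the efficiency of the Perron eigenvector
of a 3-block perturbed consistent matrix:
`a₁₂ ≥ 1`, `a₂₃ ≥ 1` and `q = a₁₃ - a₂₃ a₁₂ ≤ 0`. -/
theorem stmt_15 {n : ℕ} (hn : 4 ≤ n) (A : Matrix (Fin n) (Fin n) ℝ)
    (hA : Reciprocal A)
    (hblock : ∀ i j : Fin n, 3 ≤ i.val ∨ 3 ≤ j.val → A i j = 1)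
    (hdiag : ∀ i, A i i = 1)
    (a12 a13 a23 : ℝ)
    (h12 : A ⟨0, by omega⟩ ⟨1, by omega⟩ = a12)
    (h13 : A ⟨0, by omega⟩ ⟨2, by omega⟩ = a13)
    (h23 : A ⟨1, by omega⟩ ⟨2, by omega⟩ = a23)
    (ha13 : 1 ≤ a13) (ha12 : 1 ≤ a12) (ha23 : 1 ≤ a23)
    (hq : a13 - a23 * a12 ≤ 0)
    (w : Fin n → ℝ) (hw : ∀ i, 0 < w i) (μ : ℝ)
    (heig : A.mulVec w = μ • w) :
    Efficient A w := by
  classical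
  obtain ⟨hApos, hArec⟩ := hA
  have h0n : 0 < n := by omega
  have h1n : 1 < n := by omega
  have h2n : 2 < n := by omega
  have h3n : 3 < n := by omega
  set i0 : Fin n := ⟨0, h0n⟩ with hi0
  set i1 : Fin n := ⟨1, h1n⟩ with hi1
  set i2 : Fin n := ⟨2, h2n⟩ with hi2
  set i3 : Fin n := ⟨3, h3n⟩ with hi3
  have h12' : A i0 i1 = a12 := h12
  have h13' : A i0 i2 = a13 := h13
  have h23' : A i1 i2 = a23 := h23
  have h21' : A i1 i0 = a12⁻¹ := by rw [hArec i0 i1, h12']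
  have h31' : A i2 i0 = a13⁻¹ := by rw [hArec i0 i2, h13']
  have h32' : A i2 i1 = a23⁻¹ := by rw [hArec i1 i2, h23']
  have ha12pos : 0 < a12 := h12' ▸ hApos i0 i1
  have ha13pos : 0 < a13 := h13' ▸ hApos i0 i2
  have ha23pos : 0 < a23 := h23' ▸ hApos i1 i2
  set T : ℝ := ∑ j ∈ Finset.univ.filter (fun j : Fin n => 3 ≤ j.val), w j with hT
  have hTpos : 0 < T := by
    apply Finset.sum_pos (fun j _ => hw j)
    exact ⟨i3, by simp [hi3]⟩
  set x : ℝ := w i0 with hx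
  set y : ℝ := w i1 with hy
  set z : ℝ := w i2 with hz
  have heq : ∀ i : Fin n, A i i0 * x + A i i1 * y + A i i2 * z + T = μ * w i := by
    intro i
    have h := congrFun heig i
    rw [Matrix.mulVec, dotProduct] at h
    rw [sum_split hn (fun j => A i j * w j)] at h
    have htail : ∑ j ∈ Finset.univ.filter (fun j : Fin n => 3 ≤ j.val), A i j * w j = T := by
      apply Finset.sum_congr rfl
      intro j hj
      rw [hblock i j (Or.inr (Finset.mem_filter.mp hj).2), one_mul]
    rw [htail] at h
    simpa using h
  have e0 : x + a12 * y + a13 * z + T = μ * x := by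
    have := heq i0; rwa [hdiag i0, h12', h13', one_mul] at this
  have e1 : a12⁻¹ * x + y + a23 * z + T = μ * y := by
    have := heq i1; rwa [h21', hdiag i1, h23', one_mul] at this
  have e2 : a13⁻¹ * x + a23⁻¹ * y + z + T = μ * z := by
    have := heq i2; rwa [h31', h32', hdiag i2, one_mul] at this
  have e3 : ∀ i : Fin n, 3 ≤ i.val → x + y + z + T = μ * w i := by
    intro i hi
    have := heq i
    rwa [hblock i i0 (Or.inl hi), hblock i i1 (Or.inl hi), hblock i i2 (Or.inl hi),
      one_mul, one_mul, one_mul] at this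
  have hxpos := hw i0
  have hypos := hw i1
  have hzpos := hw i2
  have hμ : 0 < μ := by
    have h3 := e3 i3 (by simp [hi3])
    by_contra h
    push_neg at h
    have : μ * w i3 ≤ 0 := mul_nonpos_of_nonpos_of_nonneg h (le_of_lt (hw i3))
    linarith
  have hwc : ∀ i : Fin n, 3 ≤ i.val → w i = w i3 := by
    intro i hi
    have := (e3 i hi).symm.trans (e3 i3 (by simp [hi3]))
    exact mul_left_cancel₀ (ne_of_gt hμ) this
  set c : ℝ := w i3 with hc
  have hcpos := hw i3
  have ec : x + y + z + T = μ * c := e3 i3 (by simp [hi3])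
  clear_value T x y z c
  have hx0 : 0 < x := by rw [hx]; exact hw i0
  have hy0 : 0 < y := by rw [hy]; exact hw i1
  have hz0 : 0 < z := by rw [hz]; exact hw i2
  have hc0 : 0 < c := by rw [hc]; exact hw i3
  -- inverse facts
  have ia12 : a12 * a12⁻¹ = 1 := mul_inv_cancel₀ (ne_of_gt ha12pos)
  have ia13 : a13 * a13⁻¹ = 1 := mul_inv_cancel₀ (ne_of_gt ha13pos)
  have ia23 : a23 * a23⁻¹ = 1 := mul_inv_cancel₀ (ne_of_gt ha23pos)
  have hi13 : a13⁻¹ ≤ 1 := by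
    rw [inv_le_one_iff₀]; right; exact ha13
  have hi23 : a23⁻¹ ≤ 1 := by
    rw [inv_le_one_iff₀]; right; exact ha23
  -- key inequalities
  have ineq1 : c ≤ x := by
    have hid : μ * (x - c) = (a12 - 1) * y + (a13 - 1) * z := by
      linear_combination ec - e0
    refine aux_le hμ ?_
    rw [hid]
    have t1 := mul_nonneg (sub_nonneg.mpr ha12) hy0.le
    have t2 := mul_nonneg (sub_nonneg.mpr ha13) hz0.le
    linarith
  have ineq2 : z ≤ c := by
    have hid : μ * (c - z) = (1 - a13⁻¹) * x + (1 - a23⁻¹) * y := by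
      linear_combination e2 - ec
    refine aux_le hμ ?_
    rw [hid]
    have t1 := mul_nonneg (sub_nonneg.mpr hi13) hx0.le
    have t2 := mul_nonneg (sub_nonneg.mpr hi23) hy0.le
    linarith
  have hkey : a12⁻¹ ≤ a23 * a13⁻¹ := by
    rw [inv_eq_one_div, ← div_eq_mul_inv a23 a13, div_le_div_iff₀ ha12pos ha13pos]
    linarith
  have ineq3 : y ≤ a23 * z := by
    have hid : μ * (a23 * z - y) =
        (a23 * a13⁻¹ - a12⁻¹) * x + (a23 * a23⁻¹ - 1) * y + (a23 - 1) * T := by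
      linear_combination e1 - a23 * e2
    rw [ia23] at hid
    refine aux_le hμ ?_
    rw [hid]
    have t1 := mul_nonneg (sub_nonneg.mpr hkey) hx0.le
    have t2 := mul_nonneg (sub_nonneg.mpr ha23) hTpos.le
    linarith
  have ineq4 : x ≤ a12 * y := by
    have hid : μ * (a12 * y - x) =
        (a12 * a12⁻¹ - 1) * x + (a23 * a12 - a13) * z + (a12 - 1) * T := by
      linear_combination e0 - a12 * e1
    rw [ia12] at hid
    refine aux_le hμ ?_
    rw [hid]
    have t1 := mul_nonneg (sub_nonneg.mpr (show a13 ≤ a23 * a12 by linarith)) hz0.le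
    have t2 := mul_nonneg (sub_nonneg.mpr ha12) hTpos.le
    linarith
  -- efficiency
  refine ⟨hw, ?_⟩
  intro v hv hdom
  set r : Fin n → ℝ := fun i => v i / w i with hr
  have key : ∀ i j : Fin n, A i j ≤ w i / w j → r i ≤ r j := by
    intro i j hij
    have h := hdom i j
    have h1 : |A i j - w i / w j| = w i / w j - A i j := by
      rw [abs_sub_comm, abs_of_nonneg (by linarith)]
    have h2 : v i / v j - A i j ≤ |A i j - v i / v j| := by
      rw [abs_sub_comm]; exact le_abs_self _
    have h3 : v i / v j ≤ w i / w j := by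
      rw [h1] at h; linarith
    have h4 : v i * w j ≤ w i * v j := (div_le_div_iff₀ (hv j) (hw j)).mp h3
    show v i / w i ≤ v j / w j
    rw [div_le_div_iff₀ (hw i) (hw j)]
    linarith
  -- edges
  have edge0 : ∀ i : Fin n, 3 ≤ i.val → r i0 ≤ r i := by
    intro i hi
    apply key
    rw [hblock i0 i (Or.inr hi), hwc i hi, ← hx]
    rw [le_div_iff₀ hc0, one_mul]
    exact ineq1
  have edge2 : ∀ i : Fin n, 3 ≤ i.val → r i ≤ r i2 := by
    intro i hi
    apply key
    rw [hblock i i2 (Or.inl hi), hwc i hi, ← hz]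
    rw [le_div_iff₀ hz0, one_mul]
    exact ineq2
  have edge21 : r i2 ≤ r i1 := by
    apply key
    rw [h32', ← hz, ← hy, le_div_iff₀ hy0]
    calc a23⁻¹ * y ≤ a23⁻¹ * (a23 * z) :=
          mul_le_mul_of_nonneg_left ineq3 (inv_nonneg.mpr ha23pos.le)
      _ = z := by rw [← mul_assoc, inv_mul_cancel₀ (ne_of_gt ha23pos), one_mul]
  have edge10 : r i1 ≤ r i0 := by
    apply key
    rw [h21', ← hy, ← hx, le_div_iff₀ hx0]
    calc a12⁻¹ * x ≤ a12⁻¹ * (a12 * y) :=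
          mul_le_mul_of_nonneg_left ineq4 (inv_nonneg.mpr ha12pos.le)
      _ = y := by rw [← mul_assoc, inv_mul_cancel₀ (ne_of_gt ha12pos), one_mul]
  have h02 : r i0 ≤ r i2 := le_trans (edge0 i3 (by simp [hi3])) (edge2 i3 (by simp [hi3]))
  have hr20 : r i2 = r i0 := le_antisymm (le_trans edge21 edge10) h02
  have hr10 : r i1 = r i0 := le_antisymm edge10 (hr20 ▸ edge21)
  have hall : ∀ i : Fin n, r i = r i0 := by
    intro i
    rcases Nat.lt_or_ge i.val 3 with h | h
    · have h' : i.val = 0 ∨ i.val = 1 ∨ i.val = 2 := by omega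
      rcases h' with h' | h' | h'
      · have : i = i0 := Fin.ext h'
        rw [this]
      · have : i = i1 := Fin.ext h'
        rw [this, hr10]
      · have : i = i2 := Fin.ext h'
        rw [this, hr20]
    · exact le_antisymm (le_trans (edge2 i h) (hr20.le)) (edge0 i h)
  intro i j
  have hi' : v i * w i0 = v i0 * w i := by
    have h' : v i / w i = v i0 / w i0 := hall i
    rw [div_eq_div_iff (ne_of_gt (hw i)) (ne_of_gt (hw i0))] at h'
    linarith
  have hj' : v j * w i0 = v i0 * w j := by
    have h' : v j / w j = v i0 / w i0 := hall j
    rw [div_eq_div_iff (ne_of_gt (hw j)) (ne_of_gt (hw i0))] at h'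
    linarith
  rw [div_eq_div_iff (ne_of_gt (hv j)) (ne_of_gt (hw j))]
  have hcancel : (v i0 * w i0) * (v i * w j) = (v i0 * w i0) * (w i * v j) := by
    linear_combination (v i0 * w j) * hi' - (v i0 * w i) * hj'
  exact mul_left_cancel₀ (ne_of_gt (mul_pos (hv i0) (hw i0))) hcancel
end

section
/- Let x >= 1, n >= 3, and let C_n(x) be the n-by-n reciprocal matrix with all above-diagonal entries equal to x. If a positive vector w = (w_1,...,w_n) satisfies w_3 <= w_1/x <= w_2 <= x w_3 and, for each i in {4,...,n}, (1/x) min{w_3,...,w_{i-1}} <= w_i <= w_1/x, then w is efficient for C_n(x). -/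
/-- A class of efficient vectors for the constant reciprocal matrix `Cₙ(x)`
with all above-diagonal entries equal to `x ≥ 1`. -/
theorem stmt_17 {n : ℕ} (hn : 3 ≤ n) (x : ℝ) (hx : 1 ≤ x)
    (C : Matrix (Fin n) (Fin n) ℝ)
    (hC : ∀ i j : Fin n, C i j =
      if i.val < j.val then x else if j.val < i.val then x⁻¹ else 1)
    (w : Fin n → ℝ) (hw : ∀ i, 0 < w i)
    (h3 : w ⟨2, by omega⟩ ≤ w ⟨0, by omega⟩ / x ∧
      w ⟨0, by omega⟩ / x ≤ w ⟨1, by omega⟩ ∧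
      w ⟨1, by omega⟩ ≤ x * w ⟨2, by omega⟩)
    (hext : ∀ i : Fin n, 3 ≤ i.val →
      (∃ j : Fin n, 2 ≤ j.val ∧ j.val < i.val ∧ w j ≤ x * w i) ∧
      w i ≤ w ⟨0, by omega⟩ / x) :
    Efficient C w := by
  have hx0 : (0:ℝ) < x := lt_of_lt_of_le one_pos hx
  refine ⟨hw, ?_⟩
  intro v hv hdom
  set a0 : Fin n := ⟨0, by omega⟩ with ha0
  set a1 : Fin n := ⟨1, by omega⟩ with ha1
  set a2 : Fin n := ⟨2, by omega⟩ with ha2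
  -- Key: along an arc p→q (meaning w p ≤ C p q * w q), the ratio v/w decreases.
  have key : ∀ p q : Fin n, w p ≤ C p q * w q → v q / w q ≤ v p / w p := by
    intro p q harc
    by_contra h
    push_neg at h
    have hs : w p / w q ≤ C p q := (div_le_iff₀ (hw q)).2 (by linarith)
    have hr : v p / v q < w p / w q := by
      rw [div_lt_div_iff₀ (hw p) (hw q)] at h
      rw [div_lt_div_iff₀ (hv q) (hw q)]
      nlinarith
    have hd := hdom p q
    have h1 : |C p q - w p / w q| = C p q - w p / w q :=
      abs_of_nonneg (by linarith)
    have h2 : C p q - v p / v q ≤ |C p q - v p / v q| := le_abs_self _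
    linarith
  -- arcs among 0,1,2
  have hC01 : C a0 a1 = x := by rw [hC]; exact if_pos (show (0:ℕ) < 1 by norm_num)
  have hC12 : C a1 a2 = x := by rw [hC]; exact if_pos (show (1:ℕ) < 2 by norm_num)
  have hC20 : C a2 a0 = x⁻¹ := by rw [hC]; exact (if_neg (show ¬ (2:ℕ) < 0 by norm_num)).trans (if_pos (show (0:ℕ) < 2 by norm_num))
  have k01 : v a1 / w a1 ≤ v a0 / w a0 := by
    apply key; rw [hC01]
    have := h3.2.1
    rw [div_le_iff₀ hx0] at this
    linarith [this]
  have k12 : v a2 / w a2 ≤ v a1 / w a1 := by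
    apply key; rw [hC12]; exact h3.2.2
  have k20 : v a0 / w a0 ≤ v a2 / w a2 := by
    apply key; rw [hC20, inv_mul_eq_div]; exact h3.1
  -- ratio is constant
  have main : ∀ k : ℕ, ∀ i : Fin n, i.val = k → v i / w i = v a0 / w a0 := by
    intro k
    induction k using Nat.strong_induction_on with
    | _ k ih =>
      intro i hik
      rcases lt_or_ge k 3 with hk3 | hk3
      · interval_cases k
        · have : i = a0 := Fin.ext hik
          rw [this]
        · have : i = a1 := Fin.ext hik
          rw [this]; linarith
        · have : i = a2 := Fin.ext hik
          rw [this]; linarith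
      · obtain ⟨⟨j, hj2, hji, hjw⟩, hi0⟩ := hext i (by omega)
        have hCji : C j i = x := by rw [hC, if_pos hji]
        have hii : 0 < i.val := by omega
        have hCi0 : C i a0 = x⁻¹ := by
          rw [hC, if_neg (by simp [ha0]), if_pos (by simpa [ha0] using hii)]
        have kji : v i / w i ≤ v j / w j := by
          apply key; rw [hCji]; exact hjw
        have ki0 : v a0 / w a0 ≤ v i / w i := by
          apply key; rw [hCi0, inv_mul_eq_div]; exact hi0
        have hjeq : v j / w j = v a0 / w a0 := ih j.val (by omega) j rfl
        linarith
  have hconst : ∀ i : Fin n, v i / w i = v a0 / w a0 := fun i => main i.val i rfl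
  intro i j
  have hi := hconst i
  have hj := hconst j
  have h : v i / w i = v j / w j := by rw [hi, hj]
  rw [div_eq_div_iff (hw i).ne' (hw j).ne'] at h
  rw [div_eq_div_iff (hv j).ne' (hw j).ne']
  linarith
end

section
/- Let x > 0, n > s >= 1, and let A be the n-by-n reciprocal matrix of block form [[C_s(x), J],[J, J]], where C_s(x) is the s-by-s reciprocal matrix with all above-diagonal entries equal to x. Then the Perron eigenvector of A is efficient for A. -/
set_option maxHeartbeats 2000000 in
/-- The Perron eigenvector of the block perturbed consistent matrix
`[[Cₛ(x), J], [J, J]]` is efficient. -/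
theorem stmt_18 {n s : ℕ} (hs1 : 1 ≤ s) (hs : s < n) (x : ℝ) (hx : 0 < x)
    (A : Matrix (Fin n) (Fin n) ℝ) (hA : Reciprocal A)
    (hB : ∀ i j : Fin n, i.val < s → j.val < s → A i j =
      if i.val < j.val then x else if j.val < i.val then x⁻¹ else 1)
    (hblock : ∀ i j : Fin n, s ≤ i.val ∨ s ≤ j.val → A i j = 1)
    (w : Fin n → ℝ) (hw : ∀ i, 0 < w i) (μ : ℝ)
    (heig : A.mulVec w = μ • w) :
    Efficient A w := by
  obtain ⟨hApos, hArec⟩ := hA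
  have hn0 : 0 < n := by omega
  have hsn : s - 1 < n := by omega
  have hxx : x * x⁻¹ = 1 := mul_inv_cancel₀ (ne_of_gt hx)
  have hxinvpos : 0 < x⁻¹ := inv_pos.mpr hx
  have hAw : ∀ i, (∑ t, A i t * w t) = μ * w i := by
    intro i
    have h := congrFun heig i
    simpa [Matrix.mulVec, dotProduct] using h
  have hμ : 0 < μ := by
    have h0 : 0 < ∑ t, A ⟨0, hn0⟩ t * w t :=
      Finset.sum_pos (fun t _ => mul_pos (hApos _ t) (hw t)) ⟨⟨0, hn0⟩, Finset.mem_univ _⟩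
    rw [hAw] at h0
    nlinarith [hw (⟨0, hn0⟩ : Fin n)]
  have hconst : ∀ k : Fin n, s ≤ k.val → w k = w ⟨s, hs⟩ := by
    have h1 : ∀ k : Fin n, s ≤ (k : ℕ) → μ * w k = ∑ t, w t := by
      intro k hk
      rw [← hAw]
      refine Finset.sum_congr rfl fun t _ => ?_
      rw [hblock k t (Or.inl hk), one_mul]
    intro k hk
    exact mul_left_cancel₀ (ne_of_gt hμ) ((h1 k hk).trans (h1 ⟨s, hs⟩ le_rfl).symm)
  have hle_of : ∀ (i j : Fin n) (a : ℝ),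
      (∀ t, (A i t - a * A j t) * w t ≤ 0) → w i ≤ a * w j := by
    intro i j a h
    have h1 : (∑ t, (A i t - a * A j t) * w t) ≤ 0 := Finset.sum_nonpos fun t _ => h t
    have h2 : (∑ t, (A i t - a * A j t) * w t) = μ * w i - a * (μ * w j) := by
      simp only [sub_mul, mul_assoc]
      rw [Finset.sum_sub_distrib, ← Finset.mul_sum, hAw, hAw]
    rw [h2] at h1
    nlinarith
  have hge_of : ∀ (i j : Fin n) (a : ℝ),
      (∀ t, 0 ≤ (A i t - a * A j t) * w t) → a * w j ≤ w i := by
    intro i j a h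
    have h1 : (0:ℝ) ≤ ∑ t, (A i t - a * A j t) * w t := Finset.sum_nonneg fun t _ => h t
    have h2 : (∑ t, (A i t - a * A j t) * w t) = μ * w i - a * (μ * w j) := by
      simp only [sub_mul, mul_assoc]
      rw [Finset.sum_sub_distrib, ← Finset.mul_sum, hAw, hAw]
    rw [h2] at h1
    nlinarith
  refine ⟨hw, ?_⟩
  intro v hv hvle
  set r : Fin n → ℝ := fun i => v i / w i with hrdef
  have hedge : ∀ i j : Fin n, A i j * w j ≤ w i → r i ≤ r j := by
    intro i j hle
    have hq : A i j ≤ w i / w j := (le_div_iff₀ (hw j)).mpr hle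
    have h1 := hvle i j
    rw [abs_of_nonpos (by linarith : A i j - w i / w j ≤ 0)] at h1
    have h2 : v i / v j - A i j ≤ |A i j - v i / v j| := by
      rw [abs_sub_comm]; exact le_abs_self _
    have h3 : v i / v j ≤ w i / w j := by linarith
    have h4 : v i * w j ≤ w i * v j := (div_le_div_iff₀ (hv j) (hw j)).mp h3
    exact (div_le_div_iff₀ (hw i) (hw j)).mpr (h4.trans_eq (mul_comm _ _))
  have hmain : ∀ i : Fin n, r i = r ⟨0, hn0⟩ := by
    rcases le_total 1 x with hx1 | hx1
    · -- case 1 ≤ x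
      have hxinv : x⁻¹ ≤ 1 := by nlinarith
      -- adjacent inequality : w m ≤ x * w (m+1)
      have hadj : ∀ m : ℕ, (hm : m + 1 < s) →
          w ⟨m, by omega⟩ ≤ x * w ⟨m + 1, by omega⟩ := by
        intro m hm
        apply hle_of
        intro t
        by_cases hts : (t : ℕ) < s
        · rw [hB ⟨m, by omega⟩ t (by simp only [Fin.val_mk]; omega) hts,
            hB ⟨m + 1, by omega⟩ t (by simp only [Fin.val_mk]; omega) hts]
          simp only [Fin.val_mk]
          rcases Nat.lt_trichotomy (t : ℕ) m with h | h | h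
          · rw [if_neg (by omega), if_pos (by omega), if_neg (by omega), if_pos (by omega)]
            nlinarith [hw t]
          · rw [if_neg (by omega), if_neg (by omega), if_neg (by omega), if_pos (by omega)]
            nlinarith [hw t]
          · rcases Nat.lt_or_ge (m + 1) (t : ℕ) with h2 | h2
            · rw [if_pos (by omega), if_pos (by omega)]
              nlinarith [hw t, mul_nonneg (mul_nonneg (abs_nonneg (x-1)) hx.le) (hw t).le,
                mul_nonneg (mul_nonneg (sub_nonneg.mpr hx1) hx.le) (hw t).le]
            · rw [if_pos (by omega), if_neg (by omega), if_neg (by omega)]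
              nlinarith [hw t]
        · rw [hblock _ t (Or.inr (by omega)), hblock _ t (Or.inr (by omega))]
          nlinarith [hw t]
      -- boundary inequalities
      have hb1 : (1:ℝ) * w ⟨s, hs⟩ ≤ w ⟨0, hn0⟩ := by
        apply hge_of
        intro t
        rw [hblock ⟨s, hs⟩ t (Or.inl (by simp only [Fin.val_mk]; omega))]
        by_cases hts : (t : ℕ) < s
        · rw [hB ⟨0, hn0⟩ t (by simp only [Fin.val_mk]; omega) hts]
          simp only [Fin.val_mk]
          rcases Nat.eq_zero_or_pos (t : ℕ) with h | h
          · rw [if_neg (by omega), if_neg (by omega)]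
            nlinarith [hw t]
          · rw [if_pos (by omega)]
            nlinarith [hw t]
        · rw [hblock ⟨0, hn0⟩ t (Or.inr (by omega))]
          nlinarith [hw t]
      have hb2 : w ⟨s - 1, hsn⟩ ≤ (1:ℝ) * w ⟨s, hs⟩ := by
        apply hle_of
        intro t
        rw [hblock ⟨s, hs⟩ t (Or.inl (by simp only [Fin.val_mk]; omega))]
        by_cases hts : (t : ℕ) < s
        · rw [hB ⟨s - 1, hsn⟩ t (by simp only [Fin.val_mk]; omega) hts]
          simp only [Fin.val_mk]
          rcases Nat.lt_or_ge (t : ℕ) (s - 1) with h | h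
          · rw [if_neg (by omega), if_pos (by omega)]
            nlinarith [hw t]
          · rw [if_neg (by omega), if_neg (by omega)]
            nlinarith [hw t]
        · rw [hblock ⟨s - 1, hsn⟩ t (Or.inr (by omega))]
          nlinarith [hw t]
      -- edges
      have he1 : r ⟨0, hn0⟩ ≤ r ⟨s, hs⟩ := by
        apply hedge
        rw [hblock ⟨0, hn0⟩ ⟨s, hs⟩ (Or.inr (by simp only [Fin.val_mk]; omega))]
        linarith
      have he2 : r ⟨s, hs⟩ ≤ r ⟨s - 1, hsn⟩ := by
        apply hedge
        rw [hblock ⟨s, hs⟩ ⟨s - 1, hsn⟩ (Or.inl (by simp only [Fin.val_mk]; omega))]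
        linarith
      have hadjr : ∀ m : ℕ, (hm : m + 1 < s) → r ⟨m + 1, by omega⟩ ≤ r ⟨m, by omega⟩ := by
        intro m hm
        apply hedge
        rw [hB ⟨m + 1, by omega⟩ ⟨m, by omega⟩ (by simp only [Fin.val_mk]; omega)
          (by simp only [Fin.val_mk]; omega)]
        rw [if_neg (by simp only [Fin.val_mk]; omega), if_pos (by simp only [Fin.val_mk]; omega)]
        rw [inv_mul_le_iff₀ hx]
        exact hadj m hm
      have rle : ∀ a b : ℕ, (hab : a ≤ b) → (hb : b < s) →
          r ⟨b, by omega⟩ ≤ r ⟨a, by omega⟩ := by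
        intro a b hab
        induction b, hab using Nat.le_induction with
        | base => intro hb; exact le_rfl
        | succ b hab ih =>
          intro hb1
          exact le_trans (hadjr b hb1) (ih (by omega))
      have heq1 : r ⟨s - 1, hsn⟩ = r ⟨0, hn0⟩ :=
        le_antisymm (rle 0 (s - 1) (by omega) (by omega)) (le_trans he1 he2)
      intro i
      obtain ⟨iv, hivn⟩ := i
      rcases Nat.lt_or_ge iv s with hi | hi
      · have ha : r ⟨iv, hivn⟩ ≤ r ⟨0, hn0⟩ := rle 0 iv (by omega) hi
        have hb : r ⟨s - 1, hsn⟩ ≤ r ⟨iv, hivn⟩ := rle iv (s - 1) (by omega) (by omega)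
        linarith [heq1]
      · have hwi : w ⟨iv, hivn⟩ = w ⟨s, hs⟩ := hconst _ hi
        have ha : r ⟨0, hn0⟩ ≤ r ⟨iv, hivn⟩ := by
          apply hedge
          rw [hblock ⟨0, hn0⟩ ⟨iv, hivn⟩ (Or.inr hi), hwi]
          linarith
        have hb : r ⟨iv, hivn⟩ ≤ r ⟨s - 1, hsn⟩ := by
          apply hedge
          rw [hblock ⟨iv, hivn⟩ ⟨s - 1, hsn⟩ (Or.inl hi), hwi]
          linarith
        linarith [heq1]
    · -- case x ≤ 1
      have hxinv : 1 ≤ x⁻¹ := by nlinarith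
      have hadj : ∀ m : ℕ, (hm : m + 1 < s) →
          x * w ⟨m + 1, by omega⟩ ≤ w ⟨m, by omega⟩ := by
        intro m hm
        apply hge_of
        intro t
        by_cases hts : (t : ℕ) < s
        · rw [hB ⟨m, by omega⟩ t (by simp only [Fin.val_mk]; omega) hts,
            hB ⟨m + 1, by omega⟩ t (by simp only [Fin.val_mk]; omega) hts]
          simp only [Fin.val_mk]
          rcases Nat.lt_trichotomy (t : ℕ) m with h | h | h
          · rw [if_neg (by omega), if_pos (by omega), if_neg (by omega), if_pos (by omega)]
            nlinarith [hw t]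
          · rw [if_neg (by omega), if_neg (by omega), if_neg (by omega), if_pos (by omega)]
            nlinarith [hw t]
          · rcases Nat.lt_or_ge (m + 1) (t : ℕ) with h2 | h2
            · rw [if_pos (by omega), if_pos (by omega)]
              nlinarith [hw t, mul_nonneg (mul_nonneg (abs_nonneg (x-1)) hx.le) (hw t).le,
                mul_nonneg (mul_nonneg (sub_nonneg.mpr hx1) hx.le) (hw t).le]
            · rw [if_pos (by omega), if_neg (by omega), if_neg (by omega)]
              nlinarith [hw t]
        · rw [hblock _ t (Or.inr (by omega)), hblock _ t (Or.inr (by omega))]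
          nlinarith [hw t]
      have hb1 : w ⟨0, hn0⟩ ≤ (1:ℝ) * w ⟨s, hs⟩ := by
        apply hle_of
        intro t
        rw [hblock ⟨s, hs⟩ t (Or.inl (by simp only [Fin.val_mk]; omega))]
        by_cases hts : (t : ℕ) < s
        · rw [hB ⟨0, hn0⟩ t (by simp only [Fin.val_mk]; omega) hts]
          simp only [Fin.val_mk]
          rcases Nat.eq_zero_or_pos (t : ℕ) with h | h
          · rw [if_neg (by omega), if_neg (by omega)]
            nlinarith [hw t]
          · rw [if_pos (by omega)]
            nlinarith [hw t]
        · rw [hblock ⟨0, hn0⟩ t (Or.inr (by omega))]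
          nlinarith [hw t]
      have hb2 : (1:ℝ) * w ⟨s, hs⟩ ≤ w ⟨s - 1, hsn⟩ := by
        apply hge_of
        intro t
        rw [hblock ⟨s, hs⟩ t (Or.inl (by simp only [Fin.val_mk]; omega))]
        by_cases hts : (t : ℕ) < s
        · rw [hB ⟨s - 1, hsn⟩ t (by simp only [Fin.val_mk]; omega) hts]
          simp only [Fin.val_mk]
          rcases Nat.lt_or_ge (t : ℕ) (s - 1) with h | h
          · rw [if_neg (by omega), if_pos (by omega)]
            nlinarith [hw t]
          · rw [if_neg (by omega), if_neg (by omega)]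
            nlinarith [hw t]
        · rw [hblock ⟨s - 1, hsn⟩ t (Or.inr (by omega))]
          nlinarith [hw t]
      have he1 : r ⟨s, hs⟩ ≤ r ⟨0, hn0⟩ := by
        apply hedge
        rw [hblock ⟨s, hs⟩ ⟨0, hn0⟩ (Or.inl (by simp only [Fin.val_mk]; omega))]
        linarith
      have he2 : r ⟨s - 1, hsn⟩ ≤ r ⟨s, hs⟩ := by
        apply hedge
        rw [hblock ⟨s - 1, hsn⟩ ⟨s, hs⟩ (Or.inr (by simp only [Fin.val_mk]; omega))]
        linarith
      have hadjr : ∀ m : ℕ, (hm : m + 1 < s) → r ⟨m, by omega⟩ ≤ r ⟨m + 1, by omega⟩ := by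
        intro m hm
        apply hedge
        rw [hB ⟨m, by omega⟩ ⟨m + 1, by omega⟩ (by simp only [Fin.val_mk]; omega)
          (by simp only [Fin.val_mk]; omega)]
        rw [if_pos (by simp only [Fin.val_mk]; omega)]
        exact hadj m hm
      have rle : ∀ a b : ℕ, (hab : a ≤ b) → (hb : b < s) →
          r ⟨a, by omega⟩ ≤ r ⟨b, by omega⟩ := by
        intro a b hab
        induction b, hab using Nat.le_induction with
        | base => intro hb; exact le_rfl
        | succ b hab ih =>
          intro hb1
          exact le_trans (ih (by omega)) (hadjr b hb1)
      have heq1 : r ⟨s - 1, hsn⟩ = r ⟨0, hn0⟩ :=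
        le_antisymm (le_trans he2 he1) (rle 0 (s - 1) (by omega) (by omega))
      intro i
      obtain ⟨iv, hivn⟩ := i
      rcases Nat.lt_or_ge iv s with hi | hi
      · have ha : r ⟨0, hn0⟩ ≤ r ⟨iv, hivn⟩ := rle 0 iv (by omega) hi
        have hb : r ⟨iv, hivn⟩ ≤ r ⟨s - 1, hsn⟩ := rle iv (s - 1) (by omega) (by omega)
        linarith [heq1]
      · have hwi : w ⟨iv, hivn⟩ = w ⟨s, hs⟩ := hconst _ hi
        have ha : r ⟨iv, hivn⟩ ≤ r ⟨0, hn0⟩ := by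
          apply hedge
          rw [hblock ⟨iv, hivn⟩ ⟨0, hn0⟩ (Or.inl hi)]
          linarith [hb1, hwi.ge, hwi.le]
        have hb : r ⟨s - 1, hsn⟩ ≤ r ⟨iv, hivn⟩ := by
          apply hedge
          rw [hblock ⟨s - 1, hsn⟩ ⟨iv, hivn⟩ (Or.inr hi), hwi]
          linarith
        linarith [heq1]
  intro i j
  have h1 : r i = r j := (hmain i).trans (hmain j).symm
  have h2 : v i / w i = v j / w j := h1
  rw [div_eq_div_iff (ne_of_gt (hw i)) (ne_of_gt (hw j))] at h2
  rw [div_eq_div_iff (ne_of_gt (hv j)) (ne_of_gt (hw j))]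
  linear_combination h2
end
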